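/- Algebraic core of the prequantization theorem (Theorem: 'There exists a Hermitian representation of the Lie algebroid A on (L → M, h) given by π(X) := ∇_{α(X)} − 2πi⟨μ̃, J*X⟩', the Kostant formula): Let L be an A-module, let D : g → End_ℝ(L) be an ℝ-linear map satisfying the Leibniz rule over α and having curvature ω along the action, and let μ : g → A be an ℝ-linear map satisfying the prequantization condition for ω. Define π(X)(s) := D(X)(s) − ((2πi) • μ(X)) • s. Then each π(X) satisfies the Leibniz rule over α, and π is a Lie algebra homomorphism: π([X,Y]) = π(X) ∘ π(Y) − π(Y) ∘ π(X) for all X, Y ∈ g. -/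
import Mathlib


/-- **Algebraic core of the prequantization theorem (Kostant formula).**
`A` models complex-valued smooth functions on `S`, `g` the sections of the acting
Lie algebroid, `α` the infinitesimal action by derivations, `L` the sections of a
line bundle, `D` a connection-type operator with curvature `ω` along the action,
and `μ` a momentum map satisfying the prequantization condition.  Then
`π(X) s = D(X) s − ((2πi) • μ(X)) • s` satisfies the Leibniz rule over `α` and is
a Lie algebra homomorphism. -/
theorem prequantization_kostant_formula
    {A : Type*} [CommRing A] [Algebra ℂ A]
    {g : Type*} [LieRing g] [LieAlgebra ℝ g]
    {L : Type*} [AddCommGroup L] [Module A L] [Module ℝ L]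
    (α : g →ₗ[ℝ] Derivation ℂ A A)
    (hα : ∀ (X Y : g) (a : A), α ⁅X, Y⁆ a = α X (α Y a) - α Y (α X a))
    (D : g →ₗ[ℝ] L →ₗ[ℝ] L)
    (hD : ∀ (X : g) (a : A) (s : L), D X (a • s) = a • D X s + α X a • s)
    (ω : g →ₗ[ℝ] g →ₗ[ℝ] A)
    (hωalt : ∀ X : g, ω X X = 0)
    (hcurv : ∀ (X Y : g) (s : L),
      D X (D Y s) - D Y (D X s) - D ⁅X, Y⁆ s
        = ((2 * (Real.pi : ℂ) * Complex.I) • ω X Y) • s)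
    (μ : g →ₗ[ℝ] A)
    (hμ : ∀ X Y : g, μ ⁅X, Y⁆ - α X (μ Y) + α Y (μ X) = - ω X Y)
    (π : g → L → L)
    (hπ : ∀ (X : g) (s : L),
      π X s = D X s - ((2 * (Real.pi : ℂ) * Complex.I) • μ X) • s) :
    (∀ (X : g) (a : A) (s : L), π X (a • s) = a • π X s + α X a • s) ∧
    (∀ (X Y : g) (s : L), π ⁅X, Y⁆ s = π X (π Y s) - π Y (π X s)) := by
  set c : ℂ := 2 * (Real.pi : ℂ) * Complex.I with hc
  refine ⟨?_, ?_⟩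
  · intro X a s
    rw [hπ, hπ, hD, smul_sub, smul_smul, smul_smul, mul_comm a]
    abel
  · intro X Y s
    have hb : D ⁅X, Y⁆ s = D X (D Y s) - D Y (D X s) - (c • ω X Y) • s := by
      have h := hcurv X Y s
      rw [sub_sub, sub_eq_iff_eq_add] at h
      rw [h]; abel
    have hm : μ ⁅X, Y⁆ = α X (μ Y) - α Y (μ X) - ω X Y := by
      have h := hμ X Y
      linear_combination h
    rw [hπ, hπ (X := X), hπ (X := Y), hπ (X := X), hπ (X := Y), map_sub, map_sub,
      hD, hD, hb, hm]
    simp only [Derivation.map_smul, smul_sub, sub_smul, smul_smul]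
    rw [mul_comm (c • μ X) (c • μ Y)]
    abel
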